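/- If the runtime of each of n uncoded parallel subtasks is i.i.d. with CDF F(nt) where F(t) = 1 − e^{−μ(t−1)} for t ≥ 1 (shifted exponential with shift 1 and rate μ), then the expected overall runtime (maximum over the n workers) equals (1/n)(1 + H_n/μ), which is Θ(log n / n). -/

import Mathlib

open MeasureTheory ProbabilityTheory Set Filter Topology

lemma runtime_aux (n : ℕ) (hn : 0 < n) (μ : ℝ) (hμ : 0 < μ) (k : ℕ) :
    IntegrableOn (fun t => 1 - (1 - Real.exp (-μ*((n:ℝ)*t-1)))^k) (Set.Ioi (1/(n:ℝ))) ∧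
    ∫ t in Set.Ioi (1/(n:ℝ)), (1 - (1 - Real.exp (-μ*((n:ℝ)*t-1)))^k)
      = (∑ i ∈ Finset.range k, (1:ℝ)/(i+1)) / ((n:ℝ)*μ) := by
  have hn' : (0:ℝ) < n := by exact_mod_cast hn
  induction k with
  | zero => simp
  | succ k ih =>
    set E : ℝ → ℝ := fun t => Real.exp (-μ*((n:ℝ)*t-1)) with hE
    have hEderiv : ∀ t : ℝ, HasDerivAt E (-(μ*n) * E t) t := by
      intro t
      have h1 : HasDerivAt (fun t : ℝ => -μ*((n:ℝ)*t-1)) (-μ*n) t := by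
        simpa using (((hasDerivAt_id t).const_mul (n:ℝ)).sub_const 1).const_mul (-μ)
      simpa [hE, mul_comm, mul_left_comm, Function.comp_def] using (Real.hasDerivAt_exp _).comp t h1
    set G : ℝ → ℝ := fun t => (1 - E t)^(k+1) / (((k:ℝ)+1) * (n*μ)) with hG
    have hGderiv : ∀ t : ℝ, HasDerivAt G ((1 - E t)^k * E t) t := by
      intro t
      have h2 : HasDerivAt (fun t => (1 - E t)^(k+1))
          (((k:ℝ)+1) * (1 - E t)^k * (μ*n * E t)) t := by
        have := ((hEderiv t).const_sub 1).pow (k+1)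
        push_cast at this ⊢
        refine this.congr_deriv ?_
        ring
      have h3 := h2.div_const (((k:ℝ)+1) * (n*μ))
      refine h3.congr_deriv ?_
      have hk : ((k:ℝ)+1) ≠ 0 := by positivity
      field_simp
    have hEpos : ∀ t, 0 < E t := fun t => Real.exp_pos _
    have hEle : ∀ t ∈ Ioi (1/(n:ℝ)), E t < 1 := by
      intro t ht
      rw [Set.mem_Ioi] at ht
      have h1 : 1 < (n:ℝ)*t := by
        calc (1:ℝ) = n * (1/n) := by field_simp
        _ < n * t := by exact mul_lt_mul_of_pos_left ht hn'
      have : -μ*((n:ℝ)*t-1) < 0 := by nlinarith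
      calc E t < Real.exp 0 := Real.exp_lt_exp.2 this
      _ = 1 := Real.exp_zero
    have hEtend : Tendsto E atTop (𝓝 0) := by
      apply Real.tendsto_exp_atBot.comp
      have h1 : Tendsto (fun t : ℝ => μ*((n:ℝ)*t-1)) atTop atTop := by
        apply Tendsto.const_mul_atTop hμ
        exact tendsto_atTop_add_const_right _ _ (tendsto_id.const_mul_atTop hn')
      exact (tendsto_neg_atTop_atBot.comp h1).congr (fun t => by simp [Function.comp, neg_mul])
    have hGtend : Tendsto G atTop (𝓝 (1 / (((k:ℝ)+1) * (n*μ)))) := by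
      have := ((hEtend.const_sub 1).pow (k+1)).div_const (((k:ℝ)+1) * (n*μ))
      simpa using this
    have hGcont : Continuous G := by
      have : Continuous E := Real.continuous_exp.comp (by continuity)
      exact (((continuous_const.sub this)).pow _).div_const _
    have hg'nonneg : ∀ t ∈ Ioi (1/(n:ℝ)), 0 ≤ (1 - E t)^k * E t := by
      intro t ht
      have h1 := hEle t ht
      have h2 := hEpos t
      exact mul_nonneg (pow_nonneg (by linarith) k) h2.le
    have hG0 : G (1/(n:ℝ)) = 0 := by
      have : E (1/(n:ℝ)) = 1 := by
        rw [hE]; simp only []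
        rw [show -μ*((n:ℝ)*(1/(n:ℝ))-1) = 0 by field_simp; ring]
        exact Real.exp_zero
      rw [hG]; simp only []
      rw [this, sub_self, zero_pow (Nat.succ_ne_zero k), zero_div]
    have hint2 : IntegrableOn (fun t => (1 - E t)^k * E t) (Ioi (1/(n:ℝ))) :=
      integrableOn_Ioi_deriv_of_nonneg hGcont.continuousWithinAt
        (fun x _ => hGderiv x) hg'nonneg hGtend
    have hval2 : ∫ t in Ioi (1/(n:ℝ)), (1 - E t)^k * E t
        = 1 / (((k:ℝ)+1) * (n*μ)) := by
      rw [integral_Ioi_of_hasDerivAt_of_nonneg hGcont.continuousWithinAt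
        (fun x _ => hGderiv x) hg'nonneg hGtend, hG0, sub_zero]
    have hsplit : ∀ t : ℝ, 1 - (1 - E t)^(k+1)
        = (1 - (1 - E t)^k) + (1 - E t)^k * E t := by
      intro t; ring
    constructor
    · apply Integrable.congr (ih.1.add hint2)
      filter_upwards [ae_restrict_mem measurableSet_Ioi] with t _ using (hsplit t).symm
    · calc ∫ t in Ioi (1/(n:ℝ)), (1 - (1 - E t)^(k+1))
          = ∫ t in Ioi (1/(n:ℝ)), ((1 - (1 - E t)^k) + (1 - E t)^k * E t) := by
            apply setIntegral_congr_fun measurableSet_Ioi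
            intro t _; exact hsplit t
        _ = (∑ i ∈ Finset.range k, (1:ℝ)/(i+1)) / ((n:ℝ)*μ)
              + 1 / (((k:ℝ)+1) * (n*μ)) := by
            rw [integral_add ih.1 hint2, ih.2, hval2]
        _ = (∑ i ∈ Finset.range (k+1), (1:ℝ)/(i+1)) / ((n:ℝ)*μ) := by
            rw [Finset.sum_range_succ]
            have hk : ((k:ℝ)+1) ≠ 0 := by positivity
            have : (n:ℝ)*μ ≠ 0 := by positivity
            field_simp

/-- If each of `n` uncoded parallel subtasks has i.i.d. runtime with CDF `F(nt)` where
`F(t) = 1 - e^{-μ(t-1)}` for `t ≥ 1` (shifted exponential), then the expected overall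
runtime (the maximum over the `n` workers) equals `(1/n)(1 + H_n/μ)`. -/
theorem expected_runtime_uncoded
    {Ω : Type*} [MeasureSpace Ω] [IsProbabilityMeasure (ℙ : Measure Ω)]
    (n : ℕ) (hn : 0 < n) (μ : ℝ) (hμ : 0 < μ)
    (T : Fin n → Ω → ℝ)
    (hmeas : ∀ i, Measurable (T i))
    (hindep : iIndepFun T ℙ)
    (hdist : ∀ i, ∀ t : ℝ,
      ℙ {ω | T i ω ≤ t} =
        ENNReal.ofReal (if 1 ≤ (n : ℝ) * t then 1 - Real.exp (-μ * ((n : ℝ) * t - 1)) else 0)) :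
    ∫ ω, (⨆ i, T i ω) ∂ℙ =
      (1 / (n : ℝ)) * (1 + (∑ i ∈ Finset.range n, (1 : ℝ) / (i + 1)) / μ) := by
  have hn' : (0:ℝ) < n := by exact_mod_cast hn
  have hne : Nonempty (Fin n) := ⟨⟨0, hn⟩⟩
  set M : Ω → ℝ := fun ω => ⨆ i, T i ω with hM
  have hbdd : ∀ ω, BddAbove (Set.range fun i => T i ω) :=
    fun ω => (Set.finite_range _).bddAbove
  have hMmeas : Measurable M := by
    have h := Finset.measurable_sup' (Finset.univ_nonempty (α := Fin n)) (fun i _ => hmeas i)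
    have : M = Finset.univ.sup' Finset.univ_nonempty T := by
      funext ω
      show (⨆ i, T i ω) = _
      rw [Finset.sup'_apply, Finset.sup'_univ_eq_ciSup]
    rwa [this]
  have hset : ∀ t : ℝ, {ω | M ω ≤ t} = ⋂ i, T i ⁻¹' Set.Iic t := by
    intro t
    ext ω
    simp only [Set.mem_setOf_eq, Set.mem_iInter, Set.mem_preimage, Set.mem_Iic, hM]
    constructor
    · intro h i; exact le_trans (le_ciSup (hbdd ω) i) h
    · intro h; exact ciSup_le h
  have hMsm : ∀ t : ℝ, MeasurableSet {ω | M ω ≤ t} := fun t => hMmeas measurableSet_Iic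
  have hcdf : ∀ t : ℝ, ℙ {ω | M ω ≤ t}
      = (ENNReal.ofReal (if 1 ≤ (n:ℝ)*t then 1 - Real.exp (-μ*((n:ℝ)*t-1)) else 0))^n := by
    intro t
    rw [hset t, hindep.meas_iInter (fun i => ⟨Set.Iic t, measurableSet_Iic, rfl⟩)]
    have : ∀ i : Fin n, ℙ (T i ⁻¹' Set.Iic t)
        = ENNReal.ofReal (if 1 ≤ (n:ℝ)*t then 1 - Real.exp (-μ*((n:ℝ)*t-1)) else 0) := by
      intro i
      have := hdist i t
      convert this using 2
      rfl
    rw [Finset.prod_congr rfl (fun i _ => this i), Finset.prod_const, Finset.card_univ,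
      Fintype.card_fin]
  have htail : ∀ t : ℝ, ℙ {ω | t < M ω} = 1 - ℙ {ω | M ω ≤ t} := by
    intro t
    have : {ω | t < M ω} = {ω | M ω ≤ t}ᶜ := by
      ext ω; simp [not_le]
    rw [this, prob_compl_eq_one_sub (hMsm t)]
  have htail_low : ∀ t : ℝ, t ≤ 1/(n:ℝ) → ℙ {ω | t < M ω} = 1 := by
    intro t ht
    have hz : ℙ {ω | M ω ≤ t} = 0 := by
      rw [hcdf t]
      have : ENNReal.ofReal (if 1 ≤ (n:ℝ)*t then 1 - Real.exp (-μ*((n:ℝ)*t-1)) else 0) = 0 := by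
        split_ifs with h
        · have h1 : (n:ℝ)*t ≤ 1 := by
            calc (n:ℝ)*t ≤ n*(1/n) := by nlinarith
            _ = 1 := by field_simp
          have h2 : (n:ℝ)*t = 1 := le_antisymm h1 h
          simp [h2]
        · simp
      rw [this, zero_pow hn.ne']
    rw [htail t, hz, tsub_zero]
  have htail_high : ∀ t : ℝ, 1/(n:ℝ) < t →
      ℙ {ω | t < M ω} = ENNReal.ofReal (1 - (1 - Real.exp (-μ*((n:ℝ)*t-1)))^n) := by
    intro t ht
    have h1 : 1 < (n:ℝ)*t := by
      calc (1:ℝ) = n * (1/n) := by field_simp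
      _ < n * t := mul_lt_mul_of_pos_left ht hn'
    have hEle : Real.exp (-μ*((n:ℝ)*t-1)) ≤ 1 := by
      have := Real.exp_le_exp.2 (show -μ*((n:ℝ)*t-1) ≤ 0 by nlinarith)
      simpa using this
    have hEpos : (0:ℝ) < Real.exp (-μ*((n:ℝ)*t-1)) := Real.exp_pos _
    have hc0 : (0:ℝ) ≤ 1 - Real.exp (-μ*((n:ℝ)*t-1)) := by linarith
    have hcn : (0:ℝ) ≤ (1 - Real.exp (-μ*((n:ℝ)*t-1)))^n := pow_nonneg hc0 n
    rw [htail t, hcdf t, if_pos h1.le, ← ENNReal.ofReal_pow hc0,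
      ENNReal.ofReal_sub 1 hcn, ENNReal.ofReal_one]
  -- a.e. nonnegativity
  have hae : 0 ≤ᵐ[ℙ] M := by
    set i0 : Fin n := ⟨0, hn⟩
    have h0 : ℙ {ω | T i0 ω ≤ 0} = 0 := by
      rw [hdist i0 0]
      norm_num
    have hae0 : ∀ᵐ ω ∂ℙ, 0 < T i0 ω := by
      rw [ae_iff]
      simpa [not_lt] using h0
    filter_upwards [hae0] with ω hω
    exact le_trans hω.le (le_ciSup (hbdd ω) i0)
  rw [integral_eq_lintegral_of_nonneg_ae hae hMmeas.aestronglyMeasurable]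
  have key := lintegral_eq_lintegral_meas_lt ℙ hae hMmeas.aemeasurable
  rw [key]
  have hsplit : (Set.Ioi (0:ℝ)) = Set.Ioc 0 (1/(n:ℝ)) ∪ Set.Ioi (1/(n:ℝ)) :=
    (Set.Ioc_union_Ioi_eq_Ioi (by positivity)).symm
  rw [hsplit, lintegral_union measurableSet_Ioi (Set.Ioc_disjoint_Ioi le_rfl)]
  have hpart1 : ∫⁻ t in Set.Ioc (0:ℝ) (1/(n:ℝ)), ℙ {a | t < M a} = ENNReal.ofReal (1/(n:ℝ)) := by
    rw [setLIntegral_congr_fun measurableSet_Ioc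
      (fun t ht => htail_low t ht.2)]
    simp [Real.volume_Ioc]
  have hpart2 : ∫⁻ t in Set.Ioi (1/(n:ℝ)), ℙ {a | t < M a}
      = ENNReal.ofReal ((∑ i ∈ Finset.range n, (1:ℝ)/(i+1)) / ((n:ℝ)*μ)) := by
    rw [setLIntegral_congr_fun measurableSet_Ioi
      (fun t ht => htail_high t ht)]
    have hnn : 0 ≤ᵐ[volume.restrict (Set.Ioi (1/(n:ℝ)))]
        (fun t => 1 - (1 - Real.exp (-μ*((n:ℝ)*t-1)))^n) := by
      filter_upwards [ae_restrict_mem measurableSet_Ioi] with t ht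
      have h1 : 1 < (n:ℝ)*t := by
        calc (1:ℝ) = n * (1/n) := by field_simp
        _ < n * t := mul_lt_mul_of_pos_left ht hn'
      have hEle : Real.exp (-μ*((n:ℝ)*t-1)) ≤ 1 := by
        have := Real.exp_le_exp.2 (show -μ*((n:ℝ)*t-1) ≤ 0 by nlinarith)
        simpa using this
      have hEpos : (0:ℝ) < Real.exp (-μ*((n:ℝ)*t-1)) := Real.exp_pos _
      have hle1 : (1 - Real.exp (-μ*((n:ℝ)*t-1)))^n ≤ 1 :=
        pow_le_one₀ (by linarith) (by linarith)
      show (0:ℝ) ≤ 1 - (1 - Real.exp (-μ*((n:ℝ)*t-1)))^n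
      linarith
    rw [← (runtime_aux n hn μ hμ n).2,
      ← ofReal_integral_eq_lintegral_ofReal (runtime_aux n hn μ hμ n).1 hnn]
  rw [hpart1, hpart2]
  have hH : (0:ℝ) ≤ ∑ i ∈ Finset.range n, (1:ℝ)/(i+1) := by positivity
  rw [← ENNReal.ofReal_add (by positivity) (by positivity),
    ENNReal.toReal_ofReal (by positivity)]
  field_simp
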